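/- Let A, B_1, ..., B_h be finite sets in a commutative group, E ⊆ A with A \ E nonempty, and for nonempty Z ⊆ A \ E define μ(Z) = (1/h)·Σ_{i=1}^h |(Z + B_i) \ (E + B_i)|/|Z|. If X minimizes μ over nonempty subsets of A \ E (and is minimal among minimizers), and X' minimizes the analogous quantity μ'(Z) = (1/h)·Σ_{i=1}^h |(Z + B_i) \ ((E ∪ X) + B_i)|/|Z| over nonempty Z ⊆ A \ (E ∪ X), then μ(X) ≤ μ'(X'). -/

import Mathlib

open Pointwise Finset

theorem mu_monotone_successive {G : Type*} [AddCommGroup G] [DecidableEq G]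
    (h : ℕ) (hh : 0 < h) (A : Finset G) (B : Fin h → Finset G)
    (E : Finset G) (hE : E ⊆ A) (hAE : (A \ E).Nonempty)
    (X : Finset G) (hX : X ⊆ A \ E) (hXne : X.Nonempty)
    (hmin : ∀ Z : Finset G, Z ⊆ A \ E → Z.Nonempty →
      (1 / h : ℝ) * ∑ i, (((X + B i) \ (E + B i)).card : ℝ) / X.card ≤
      (1 / h : ℝ) * ∑ i, (((Z + B i) \ (E + B i)).card : ℝ) / Z.card)
    (hminimal : ∀ Z : Finset G, Z ⊆ A \ E → Z.Nonempty →
      (1 / h : ℝ) * ∑ i, (((Z + B i) \ (E + B i)).card : ℝ) / Z.card =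
      (1 / h : ℝ) * ∑ i, (((X + B i) \ (E + B i)).card : ℝ) / X.card →
      X.card ≤ Z.card)
    (X' : Finset G) (hX' : X' ⊆ A \ (E ∪ X)) (hX'ne : X'.Nonempty)
    (hmin' : ∀ Z : Finset G, Z ⊆ A \ (E ∪ X) → Z.Nonempty →
      (1 / h : ℝ) * ∑ i, (((X' + B i) \ ((E ∪ X) + B i)).card : ℝ) / X'.card ≤
      (1 / h : ℝ) * ∑ i, (((Z + B i) \ ((E ∪ X) + B i)).card : ℝ) / Z.card) :
    (1 / h : ℝ) * ∑ i, (((X + B i) \ (E + B i)).card : ℝ) / X.card ≤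
    (1 / h : ℝ) * ∑ i, (((X' + B i) \ ((E ∪ X) + B i)).card : ℝ) / X'.card := by
  classical
  have hdisj : Disjoint X X' := by
    rw [Finset.disjoint_left]
    intro a ha ha'
    have h2 := hX' ha'
    rw [Finset.mem_sdiff, Finset.mem_union] at h2
    exact h2.2 (Or.inr ha)
  set Z := X ∪ X' with hZ
  have hZsub : Z ⊆ A \ E := by
    refine Finset.union_subset hX (hX'.trans ?_)
    exact Finset.sdiff_subset_sdiff le_rfl Finset.subset_union_left
  have hZne : Z.Nonempty := hXne.mono Finset.subset_union_left
  have hZcard : (Z.card : ℝ) = X.card + X'.card := by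
    rw [hZ, Finset.card_union_of_disjoint hdisj]; push_cast; ring
  have hkey : ∀ i, (((Z + B i) \ (E + B i)).card : ℝ) ≤
      ((X + B i) \ (E + B i)).card + ((X' + B i) \ ((E ∪ X) + B i)).card := by
    intro i
    have hsub : (Z + B i) \ (E + B i) ⊆
        ((X + B i) \ (E + B i)) ∪ ((X' + B i) \ ((E ∪ X) + B i)) := by
      intro z hz
      simp only [hZ, Finset.union_add, Finset.mem_sdiff, Finset.mem_union] at hz ⊢
      rcases hz with ⟨hz1 | hz1, hz2⟩
      · exact Or.inl ⟨hz1, hz2⟩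
      · by_cases hx : z ∈ X + B i
        · exact Or.inl ⟨hx, hz2⟩
        · exact Or.inr ⟨hz1, fun hc => hc.elim hz2 hx⟩
    calc (((Z + B i) \ (E + B i)).card : ℝ)
        ≤ ((((X + B i) \ (E + B i)) ∪ ((X' + B i) \ ((E ∪ X) + B i))).card : ℝ) := by
          exact_mod_cast Finset.card_le_card hsub
      _ ≤ _ := by exact_mod_cast Finset.card_union_le _ _
  have hx : (0:ℝ) < X.card := by exact_mod_cast Finset.card_pos.2 hXne
  have hy : (0:ℝ) < X'.card := by exact_mod_cast Finset.card_pos.2 hX'ne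
  have hinv : (0:ℝ) < 1 / h := by positivity
  have h1 := hmin Z hZsub hZne
  rw [← Finset.sum_div, ← Finset.sum_div] at h1 ⊢
  rw [mul_le_mul_iff_right₀ hinv] at h1 ⊢
  set S := ∑ i, (((X + B i) \ (E + B i)).card : ℝ) with hS
  set T := ∑ i, (((X' + B i) \ ((E ∪ X) + B i)).card : ℝ) with hT
  have hU : (∑ i, (((Z + B i) \ (E + B i)).card : ℝ)) ≤ S + T := by
    rw [hS, hT, ← Finset.sum_add_distrib]
    exact Finset.sum_le_sum fun i _ => hkey i
  have hSnn : 0 ≤ S := Finset.sum_nonneg fun i _ => by positivity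
  have h2 : S / X.card ≤ (S + T) / (X.card + X'.card) := by
    calc S / X.card ≤ (∑ i, (((Z + B i) \ (E + B i)).card : ℝ)) / Z.card := h1
      _ ≤ (S + T) / (X.card + X'.card) := by
          rw [hZcard]
          gcongr
  rw [div_le_div_iff₀ hx (by linarith : (0:ℝ) < X.card + X'.card)] at h2
  rw [div_le_div_iff₀ hx hy]
  nlinarith
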